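/- Let n ≥ 2, 1 ≤ k ≤ n−1, let a·x ≥ α be a non boolean non rank facet defining inequality of Q(C_n^k) with positive integer coefficients, set a^0 = min{a_i : i ∈ Z_n} and W = {i ∈ Z_n : a_i > a^0}. Then: (1) for every i ∈ Z_n, |C^i ∩ (Z_n ∖ W)| ≥ 2; and (2) for every i ∈ W, a_i ≤ 2a^0. -/

import Mathlib

/-- `Cseg n k i` is the set `C^i = {i, i+1, …, i+k−1} ⊆ ℤ_n`. -/
def Cseg (n k : ℕ) (i : ZMod n) : Finset (ZMod n) :=
  (Finset.range k).image fun h : ℕ => i + (h : ZMod n)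

/-- A cover of the circulant matrix `C_n^k`. -/
def IsCover (n k : ℕ) (x : Finset (ZMod n)) : Prop :=
  ∀ i : ZMod n, (x ∩ Cseg n k i).Nonempty

/-- A minimal cover of `C_n^k`. -/
def IsMinimalCover (n k : ℕ) (x : Finset (ZMod n)) : Prop :=
  IsCover n k x ∧ ∀ y : Finset (ZMod n), y ⊂ x → ¬ IsCover n k y

/-- The covering number `τ(C_n^k)`. -/
noncomputable def coveringNumber (n k : ℕ) : ℕ :=
  sInf {m : ℕ | ∃ x : Finset (ZMod n), IsCover n k x ∧ x.card = m}

/-- A minimum cover of `C_n^k`. -/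
noncomputable def IsMinimumCover (n k : ℕ) (x : Finset (ZMod n)) : Prop :=
  IsCover n k x ∧ x.card = coveringNumber n k

/-- `xcov n k i` is the cover `x^i = {i + h·k : 0 ≤ h ≤ ⌈n/k⌉ − 1}`. -/
def xcov (n k : ℕ) (i : ZMod n) : Finset (ZMod n) :=
  (Finset.range ((n + k - 1) / k)).image fun h : ℕ => i + ((h * k : ℕ) : ZMod n)

/-- The cyclic closed interval `[a,b]_n` of `ℤ_n`. -/
def cycInterval (n : ℕ) (a b : ZMod n) : Finset (ZMod n) :=
  (Finset.range ((b - a).val + 1)).image fun h : ℕ => a + (h : ZMod n)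

/-- The inequality `a·x ≥ α` is valid for `Q(C_n^k)`. -/
def IsValid (n k : ℕ) (a : ZMod n → ℤ) (α : ℤ) : Prop :=
  ∀ x : Finset (ZMod n), IsCover n k x → α ≤ ∑ i ∈ x, a i

/-- A root of a valid inequality: a cover satisfying it with equality. -/
def IsRoot (n k : ℕ) (a : ZMod n → ℤ) (α : ℤ) (x : Finset (ZMod n)) : Prop :=
  IsCover n k x ∧ ∑ i ∈ x, a i = α

/-- Characteristic vector of a subset of `ℤ_n`. -/
noncomputable def charVec (n : ℕ) (x : Finset (ZMod n)) : ZMod n → ℝ :=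
  fun i => if i ∈ x then 1 else 0

/-- `a·x ≥ α` is facet defining for `Q(C_n^k)`: it is valid, and the characteristic
vectors of its roots affinely span an `(n−1)`-dimensional affine subspace of `ℝ^n`. -/
def IsFacet (n k : ℕ) (a : ZMod n → ℤ) (α : ℤ) : Prop :=
  IsValid n k a α ∧
    Module.finrank ℝ
      (affineSpan ℝ
        {v : ZMod n → ℝ | ∃ x : Finset (ZMod n), IsRoot n k a α x ∧ v = charVec n x}).direction
      = n - 1

/-- `a·x ≥ α` is a positive multiple of one of the boolean inequalities
`x_i ≥ 0`, `−x_i ≥ −1`, `∑_{j ∈ C^i} x_j ≥ 1`. -/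
def IsBooleanMultiple (n k : ℕ) (a : ZMod n → ℤ) (α : ℤ) : Prop :=
  ∃ c : ℤ, 0 < c ∧
    ( (∃ i : ZMod n, (∀ j, a j = if j = i then c else 0) ∧ α = 0)
    ∨ (∃ i : ZMod n, (∀ j, a j = if j = i then -c else 0) ∧ α = -c)
    ∨ (∃ i : ZMod n, (∀ j, a j = if j ∈ Cseg n k i then c else 0) ∧ α = c) )

/-- `a·x ≥ α` is a positive multiple of the rank constraint `∑ x_i ≥ ⌈n/k⌉`. -/
def IsRankMultiple (n k : ℕ) (a : ZMod n → ℤ) (α : ℤ) : Prop :=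
  ∃ c : ℤ, 0 < c ∧ (∀ j, a j = c) ∧ α = c * (((n + k - 1) / k : ℕ) : ℤ)

-- ################ auxiliary development ################

structure Ctx (n k : ℕ) (a : ZMod n → ℤ) (α : ℤ) (a0 : ℤ) : Prop where
  hn : 2 ≤ n
  hk1 : 1 ≤ k
  hk2 : k ≤ n - 1
  hpos : ∀ i, 1 ≤ a i
  hvalid : IsValid n k a α
  hdim : Module.finrank ℝ
      (affineSpan ℝ
        {v : ZMod n → ℝ | ∃ x : Finset (ZMod n), IsRoot n k a α x ∧ v = charVec n x}).direction
      = n - 1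
  ha0mem : ∃ w, a w = a0
  ha0le : ∀ i, a0 ≤ a i

namespace Ctx

variable {n k : ℕ} {a : ZMod n → ℤ} {α : ℤ} {a0 : ℤ}

theorem nz (C : Ctx n k a α a0) : NeZero n := ⟨by have := C.hn; omega⟩

theorem hkn (C : Ctx n k a α a0) : k < n := by have := C.hn; have := C.hk2; omega

theorem mem_Cseg (C : Ctx n k a α a0) {i j : ZMod n} :
    j ∈ Cseg n k i ↔ (j - i).val < k := by
  haveI : NeZero n := C.nz
  constructor
  · intro h
    rw [Cseg, Finset.mem_image] at h
    obtain ⟨h0, hh0, rfl⟩ := h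
    rw [Finset.mem_range] at hh0
    rw [add_sub_cancel_left, ZMod.val_natCast]
    exact lt_of_le_of_lt (Nat.mod_le _ _) hh0
  · intro h
    rw [Cseg, Finset.mem_image]
    exact ⟨(j - i).val, Finset.mem_range.2 h, by rw [ZMod.natCast_zmod_val]; ring⟩

theorem add_mem_Cseg {h : ℕ} (hh : h < k) (i : ZMod n) : i + (h : ZMod n) ∈ Cseg n k i :=
  Finset.mem_image.2 ⟨h, Finset.mem_range.2 hh, rfl⟩

theorem cast_injn (C : Ctx n k a α a0) {p q : ℕ} (hp : p < n) (hq : q < n)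
    (h : (p : ZMod n) = q) : p = q := by
  have := congrArg ZMod.val h
  rwa [ZMod.val_cast_of_lt hp, ZMod.val_cast_of_lt hq] at this

noncomputable def dotL (n : ℕ) [NeZero n] (w : ZMod n → ℝ) : (ZMod n → ℝ) →ₗ[ℝ] ℝ where
  toFun v := ∑ i, w i * v i
  map_add' u v := by
    simp [mul_add, Finset.sum_add_distrib]
  map_smul' c v := by
    simp only [Pi.smul_apply, smul_eq_mul, RingHom.id_apply, Finset.mul_sum]
    exact Finset.sum_congr rfl fun i _ => by ring

theorem dotL_charVec (n : ℕ) [NeZero n] (w : ZMod n → ℝ) (x : Finset (ZMod n)) :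
    dotL n w (charVec n x) = ∑ i ∈ x, w i := by
  classical
  show (∑ i, w i * (if i ∈ x then (1:ℝ) else 0)) = _
  simp only [mul_ite, mul_one, mul_zero]
  rw [← Finset.sum_filter, Finset.filter_mem_eq_inter, Finset.univ_inter]

theorem dotL_delta (n : ℕ) [NeZero n] (w : ZMod n → ℝ) (t : ZMod n) :
    dotL n w (fun i => if i = t then (1:ℝ) else 0) = w t := by
  classical
  show (∑ i, w i * (if i = t then (1:ℝ) else 0)) = _
  simp only [mul_ite, mul_one, mul_zero]
  rw [Finset.sum_ite_eq' Finset.univ t w]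
  simp

variable {n k : ℕ} {a : ZMod n → ℤ} {α : ℤ} {a0 : ℤ}

theorem hyper (C : Ctx n k a α a0) (b : ZMod n → ℝ) (β : ℝ)
    (hconst : ∀ x : Finset (ZMod n), IsRoot n k a α x → ∑ i ∈ x, b i = β)
    (j j' : ZMod n) (hbj : b j = 1) (hbj' : b j' = 0) : False := by
  haveI : NeZero n := C.nz
  set aR : ZMod n → ℝ := fun i => ((a i : ℤ) : ℝ) with haR
  set f : (ZMod n → ℝ) →ₗ[ℝ] ℝ × ℝ := (dotL n aR).prod (dotL n b) with hf
  have haj' : aR j' ≠ 0 := by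
    have h1 := C.hpos j'
    have h2 : (1 : ℝ) ≤ aR j' := by simp only [haR]; exact_mod_cast h1
    linarith
  have hdelta : ∀ t, f (fun i => if i = t then (1:ℝ) else 0) = (aR t, b t) := by
    intro t
    simp [hf, LinearMap.prod_apply, Pi.prod, dotL_delta]
  have hsurj : Function.Surjective f := by
    rintro ⟨p, q⟩
    refine ⟨q • (fun i => if i = j then (1:ℝ) else 0)
      + ((p - q * aR j) / aR j') • (fun i => if i = j' then (1:ℝ) else 0), ?_⟩
    rw [map_add, map_smul, map_smul, hdelta, hdelta, hbj, hbj']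
    rw [Prod.ext_iff]
    constructor
    · show q * aR j + (p - q * aR j) / aR j' * aR j' = p
      field_simp
      ring
    · show q * 1 + (p - q * aR j) / aR j' * 0 = q
      ring
  have hkey : ∀ x : Finset (ZMod n), IsRoot n k a α x → f (charVec n x) = ((α : ℝ), β) := by
    intro x hx
    have h1 : dotL n aR (charVec n x) = (α : ℝ) := by
      rw [dotL_charVec]
      have := hx.2
      simp only [haR]
      exact_mod_cast congrArg (Int.cast : ℤ → ℝ) this
    have h2 : dotL n b (charVec n x) = β := by rw [dotL_charVec]; exact hconst x hx
    simp [hf, LinearMap.prod_apply, Pi.prod, h1, h2]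
  have hker : vectorSpan ℝ {v : ZMod n → ℝ | ∃ x : Finset (ZMod n), IsRoot n k a α x ∧ v = charVec n x} ≤ LinearMap.ker f := by
    rw [vectorSpan_def, Submodule.span_le]
    rintro z hz
    rw [Set.mem_vsub] at hz
    obtain ⟨v1, hv1, v2, hv2, rfl⟩ := hz
    obtain ⟨x1, hx1, rfl⟩ := hv1
    obtain ⟨x2, hx2, rfl⟩ := hv2
    simp only [SetLike.mem_coe, LinearMap.mem_ker, vsub_eq_sub, map_sub,
      hkey _ hx1, hkey _ hx2, sub_self]
  have hrange : Module.finrank ℝ (LinearMap.range f) = 2 := by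
    rw [LinearMap.range_eq_top.2 hsurj, finrank_top, Module.finrank_prod, Module.finrank_self]
  have hrn := LinearMap.finrank_range_add_finrank_ker f
  rw [Module.finrank_pi, ZMod.card] at hrn
  have hdir := C.hdim
  rw [direction_affineSpan] at hdir
  have hmono := Submodule.finrank_mono hker
  rw [hdir, hrange] at *
  have h2n := C.hn
  omega

theorem exists_root_mem (C : Ctx n k a α a0) (i : ZMod n) :
    ∃ x : Finset (ZMod n), IsRoot n k a α x ∧ i ∈ x := by
  haveI : NeZero n := C.nz
  by_contra h
  push_neg at h
  refine C.hyper (fun t => if t = i then (1:ℝ) else 0) 0 ?_ i (i + 1) (if_pos rfl) ?_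
  · intro x hx
    rw [Finset.sum_ite_eq' x i (fun _ => (1:ℝ)), if_neg (h x hx)]
  · show (if i + 1 = i then (1:ℝ) else 0) = 0
    rw [if_neg]
    intro he
    have h1 : (1 : ZMod n) = 0 := by
      have := congrArg (fun z => z - i) he
      simpa using this
    have h2 : ((1:ℕ) : ZMod n) = ((0:ℕ) : ZMod n) := by push_cast; exact h1
    have := C.cast_injn (by have := C.hn; omega) (by have := C.hn; omega) h2
    omega

theorem exists_root_two (C : Ctx n k a α a0) (c : ZMod n) :
    ∃ (x : Finset (ZMod n)) (q1 q2 : ℕ), IsRoot n k a α x ∧ q1 < q2 ∧ q2 < k ∧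
      (c + (q1 : ZMod n)) ∈ x ∧ (c + (q2 : ZMod n)) ∈ x := by
  haveI : NeZero n := C.nz
  by_contra h
  push_neg at h
  -- j' outside the segment
  have hcard : (Cseg n k c).card < n := by
    have h1 : (Cseg n k c).card ≤ k := le_trans (Finset.card_image_le) (by simp)
    exact lt_of_le_of_lt h1 C.hkn
  have hcompl : ((Cseg n k c)ᶜ : Finset (ZMod n)).Nonempty := by
    rw [← Finset.card_pos, Finset.card_compl, ZMod.card]
    omega
  obtain ⟨j', hj'⟩ := hcompl
  rw [Finset.mem_compl] at hj'
  refine C.hyper (fun t => if t ∈ Cseg n k c then (1:ℝ) else 0) 1 ?_ c j'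
    (if_pos ?_) (if_neg hj')
  · intro x hx
    have hone : (x ∩ Cseg n k c).card = 1 := by
      refine le_antisymm ?_ (Finset.one_le_card.2 (hx.1 c))
      rw [Finset.card_le_one]
      intro u hu v hv
      rw [Finset.mem_inter] at hu hv
      by_contra hne
      have hu2 := (C.mem_Cseg).1 hu.2
      have hv2 := (C.mem_Cseg).1 hv.2
      have hueq : u = c + (((u - c).val : ℕ) : ZMod n) := by rw [ZMod.natCast_zmod_val]; ring
      have hveq : v = c + (((v - c).val : ℕ) : ZMod n) := by rw [ZMod.natCast_zmod_val]; ring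
      have hne2 : (u - c).val ≠ (v - c).val := by
        intro he
        apply hne
        rw [hueq, hveq, he]
      rcases lt_or_gt_of_ne hne2 with hlt | hgt
      · exact h x _ _ hx hlt hv2 (hueq ▸ hu.1) (hveq ▸ hv.1)
      · exact h x _ _ hx hgt hu2 (hveq ▸ hv.1) (hueq ▸ hu.1)
    classical
    calc ∑ t ∈ x, (if t ∈ Cseg n k c then (1:ℝ) else 0)
        = ∑ t ∈ x.filter (· ∈ Cseg n k c), (1:ℝ) := (Finset.sum_filter _ _).symm
      _ = 1 := by
          rw [Finset.filter_mem_eq_inter, Finset.sum_const, hone]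
          simp
  · exact Finset.mem_image.2 ⟨0, Finset.mem_range.2 C.hk1, by simp⟩

theorem root_mset (C : Ctx n k a α a0) {x : Finset (ZMod n)} (hx : IsRoot n k a α x)
    {j : ZMod n} (hj : j ∈ x) : ∃ m, x ∩ Cseg n k m = {j} := by
  by_contra h
  push_neg at h
  have hcov : IsCover n k (x.erase j) := by
    intro i
    obtain ⟨w, hw⟩ := hx.1 i
    rw [Finset.mem_inter] at hw
    by_cases hwj : w = j
    · subst hwj
      have : ∃ w' ∈ x ∩ Cseg n k i, w' ≠ w := by
        by_contra h2
        push_neg at h2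
        exact h i (Finset.eq_singleton_iff_unique_mem.2 ⟨Finset.mem_inter.2 hw, h2⟩)
      obtain ⟨w', hw', hww⟩ := this
      rw [Finset.mem_inter] at hw'
      exact ⟨w', Finset.mem_inter.2 ⟨Finset.mem_erase.2 ⟨hww, hw'.1⟩, hw'.2⟩⟩
    · exact ⟨w, Finset.mem_inter.2 ⟨Finset.mem_erase.2 ⟨hwj, hw.1⟩, hw.2⟩⟩
  have h1 := C.hvalid _ hcov
  rw [Finset.sum_erase_eq_sub hj, hx.2] at h1
  have := C.hpos j
  omega

theorem replace (C : Ctx n k a α a0) {x : Finset (ZMod n)} (hx : IsRoot n k a α x)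
    {j : ZMod n} (hj : j ∈ x) (T : Finset (ZMod n))
    (hT : ∀ m, x ∩ Cseg n k m = {j} → (T ∩ Cseg n k m).Nonempty) :
    a j ≤ ∑ t ∈ T, a t := by
  classical
  have hcov : IsCover n k (x.erase j ∪ T) := by
    intro i
    by_cases hone : x ∩ Cseg n k i = {j}
    · obtain ⟨t, ht⟩ := hT i hone
      rw [Finset.mem_inter] at ht
      exact ⟨t, Finset.mem_inter.2 ⟨Finset.mem_union_right _ ht.1, ht.2⟩⟩
    · obtain ⟨w, hw⟩ := hx.1 i
      rw [Finset.mem_inter] at hw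
      by_cases hwj : w = j
      · subst hwj
        have : ∃ w' ∈ x ∩ Cseg n k i, w' ≠ w := by
          by_contra h2
          push_neg at h2
          exact hone (Finset.eq_singleton_iff_unique_mem.2 ⟨Finset.mem_inter.2 hw, h2⟩)
        obtain ⟨w', hw', hww⟩ := this
        rw [Finset.mem_inter] at hw'
        exact ⟨w', Finset.mem_inter.2
          ⟨Finset.mem_union_left _ (Finset.mem_erase.2 ⟨hww, hw'.1⟩), hw'.2⟩⟩
      · exact ⟨w, Finset.mem_inter.2
          ⟨Finset.mem_union_left _ (Finset.mem_erase.2 ⟨hwj, hw.1⟩), hw.2⟩⟩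
  have h1 := C.hvalid _ hcov
  have h2 : ∑ t ∈ x.erase j ∪ T, a t ≤ (∑ t ∈ x.erase j, a t) + ∑ t ∈ T, a t := by
    have h3 := Finset.sum_union_inter (s₁ := x.erase j) (s₂ := T) (f := a)
    have h4 : 0 ≤ ∑ t ∈ (x.erase j) ∩ T, a t :=
      Finset.sum_nonneg fun i _ => le_trans zero_le_one (C.hpos i)
    omega
  rw [Finset.sum_erase_eq_sub hj, hx.2] at h2
  omega

theorem t1 (C : Ctx n k a α a0) {x : Finset (ZMod n)} (hx : IsRoot n k a α x)
    {j1 : ZMod n} (hj1 : j1 ∈ x) {d : ℕ} (hd0 : 0 < d) (hdk : d < k)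
    (hj2 : j1 + (d : ZMod n) ∈ x) {u : ℕ} (hu : u ≤ k - d) :
    a j1 ≤ a (j1 - (u : ZMod n)) := by
  haveI : NeZero n := C.nz
  have hkn := C.hkn
  have hrep := C.replace hx hj1 {j1 - (u : ZMod n)} ?_
  · simpa using hrep
  intro m hm
  have hj1m : j1 ∈ Cseg n k m := by
    have h1 : j1 ∈ x ∩ Cseg n k m := by rw [hm]; exact Finset.mem_singleton_self j1
    exact (Finset.mem_inter.1 h1).2
  have ho : (j1 - m).val < k := (C.mem_Cseg).1 hj1m
  set o := (j1 - m).val with hodef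
  have hon : o < n := ZMod.val_lt (j1 - m)
  have hoval : ((o : ℕ) : ZMod n) = j1 - m := ZMod.natCast_zmod_val _
  have hj2ne : j1 + (d : ZMod n) ≠ j1 := by
    intro he
    have h1 : ((d : ℕ) : ZMod n) = ((0 : ℕ) : ZMod n) := by
      push_cast
      linear_combination he
    have := C.cast_injn (by omega) (by omega) h1
    omega
  have hj2nm : j1 + (d : ZMod n) ∉ Cseg n k m := by
    intro hmem
    have h1 : j1 + (d : ZMod n) ∈ x ∩ Cseg n k m := Finset.mem_inter.2 ⟨hj2, hmem⟩
    rw [hm, Finset.mem_singleton] at h1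
    exact hj2ne h1
  have hval2 : (j1 + (d : ZMod n) - m).val = (o + d) % n := by
    have he : j1 + (d : ZMod n) - m = ((o + d : ℕ) : ZMod n) := by
      rw [Nat.cast_add, hoval]; ring
    rw [he, ZMod.val_natCast]
  have hod : o + d < n := by
    by_contra hge
    push_neg at hge
    apply hj2nm
    rw [C.mem_Cseg, hval2]
    have h2 : (o + d) % n = o + d - n := by
      rw [Nat.mod_eq_sub_mod hge, Nat.mod_eq_of_lt (by omega)]
    omega
  have hokd : k ≤ o + d := by
    by_contra hlt
    push_neg at hlt
    apply hj2nm
    rw [C.mem_Cseg, hval2, Nat.mod_eq_of_lt (by omega)]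
    omega
  refine ⟨j1 - (u : ZMod n), Finset.mem_inter.2 ⟨Finset.mem_singleton_self _, ?_⟩⟩
  rw [C.mem_Cseg]
  have huo : u ≤ o := by omega
  have he2 : j1 - (u : ZMod n) - m = ((o - u : ℕ) : ZMod n) := by
    rw [Nat.cast_sub huo, hoval]; ring
  rw [he2, ZMod.val_natCast, Nat.mod_eq_of_lt (by omega)]
  omega

theorem t2 (C : Ctx n k a α a0) {x : Finset (ZMod n)} (hx : IsRoot n k a α x)
    {j1 : ZMod n} (hj1 : j1 ∈ x) {d : ℕ} (hd0 : 0 < d) (hdk : d < k)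
    (hj2 : j1 + (d : ZMod n) ∈ x) {u : ℕ} (hu : u ≤ k - d) :
    a (j1 + (d : ZMod n)) ≤ a (j1 + (d : ZMod n) + (u : ZMod n)) := by
  haveI : NeZero n := C.nz
  have hkn := C.hkn
  have hrep := C.replace hx hj2 {j1 + (d : ZMod n) + (u : ZMod n)} ?_
  · simpa using hrep
  intro m hm
  have hj2m : j1 + (d : ZMod n) ∈ Cseg n k m := by
    have h1 : j1 + (d : ZMod n) ∈ x ∩ Cseg n k m := by
      rw [hm]; exact Finset.mem_singleton_self _
    exact (Finset.mem_inter.1 h1).2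
  have ho : (j1 + (d : ZMod n) - m).val < k := (C.mem_Cseg).1 hj2m
  set o := (j1 + (d : ZMod n) - m).val with hodef
  have hon : o < n := ZMod.val_lt _
  have hoval : ((o : ℕ) : ZMod n) = j1 + (d : ZMod n) - m := ZMod.natCast_zmod_val _
  have hj1ne : j1 ≠ j1 + (d : ZMod n) := by
    intro he
    have h1 : ((d : ℕ) : ZMod n) = ((0 : ℕ) : ZMod n) := by
      push_cast
      linear_combination - he
    have := C.cast_injn (by omega) (by omega) h1
    omega
  have hj1nm : j1 ∉ Cseg n k m := by
    intro hmem
    have h1 : j1 ∈ x ∩ Cseg n k m := Finset.mem_inter.2 ⟨hj1, hmem⟩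
    rw [hm, Finset.mem_singleton] at h1
    exact hj1ne h1
  have ho2d : o < d := by
    by_contra hge
    push_neg at hge
    apply hj1nm
    rw [C.mem_Cseg]
    have he : j1 - m = ((o - d : ℕ) : ZMod n) := by
      rw [Nat.cast_sub hge, hoval]; ring
    rw [he, ZMod.val_natCast, Nat.mod_eq_of_lt (by omega)]
    omega
  refine ⟨j1 + (d : ZMod n) + (u : ZMod n), Finset.mem_inter.2 ⟨Finset.mem_singleton_self _, ?_⟩⟩
  rw [C.mem_Cseg]
  have he2 : j1 + (d : ZMod n) + (u : ZMod n) - m = ((o + u : ℕ) : ZMod n) := by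
    rw [Nat.cast_add, hoval]; ring
  rw [he2, ZMod.val_natCast, Nat.mod_eq_of_lt (by omega)]
  omega

theorem surg (C : Ctx n k a α a0) {x : Finset (ZMod n)} (hx : IsRoot n k a α x)
    {i : ZMod n} (hi : i ∈ x) {s t : ℕ} (hs : 1 ≤ s) (ht : 1 ≤ t) (hst : s + t ≤ k) :
    a i ≤ a (i - (s : ZMod n)) + a (i + (t : ZMod n)) := by
  haveI : NeZero n := C.nz
  have hkn := C.hkn
  have hne : i - (s : ZMod n) ≠ i + (t : ZMod n) := by
    intro he
    have h1 : ((s + t : ℕ) : ZMod n) = ((0 : ℕ) : ZMod n) := by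
      push_cast
      linear_combination - he
    have := C.cast_injn (by omega) (by omega) h1
    omega
  have hrep := C.replace hx hi {i - (s : ZMod n), i + (t : ZMod n)} ?_
  · rwa [Finset.sum_pair hne] at hrep
  intro m hm
  have him : i ∈ Cseg n k m := by
    have h1 : i ∈ x ∩ Cseg n k m := by rw [hm]; exact Finset.mem_singleton_self i
    exact (Finset.mem_inter.1 h1).2
  have ho : (i - m).val < k := (C.mem_Cseg).1 him
  set o := (i - m).val with hodef
  have hoval : ((o : ℕ) : ZMod n) = i - m := ZMod.natCast_zmod_val _
  by_cases hos : s ≤ o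
  · refine ⟨i - (s : ZMod n), Finset.mem_inter.2 ⟨by simp, ?_⟩⟩
    rw [C.mem_Cseg]
    have he : i - (s : ZMod n) - m = ((o - s : ℕ) : ZMod n) := by
      rw [Nat.cast_sub hos, hoval]; ring
    rw [he, ZMod.val_natCast, Nat.mod_eq_of_lt (by omega)]
    omega
  · refine ⟨i + (t : ZMod n), Finset.mem_inter.2 ⟨by simp, ?_⟩⟩
    rw [C.mem_Cseg]
    have he : i + (t : ZMod n) - m = ((o + t : ℕ) : ZMod n) := by
      rw [Nat.cast_add, hoval]; ring
    rw [he, ZMod.val_natCast, Nat.mod_eq_of_lt (by omega)]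
    omega

end Ctx

def FreeSeg (n : ℕ) (a : ZMod n → ℤ) (a0 : ℤ) (c : ZMod n) (L : ℕ) : Prop :=
  ∀ h : ℕ, h < L → a (c + (h : ZMod n)) ≠ a0

namespace Ctx

variable {n k : ℕ} {a : ZMod n → ℤ} {α : ℤ} {a0 : ℤ}

theorem free_extend (C : Ctx n k a α a0) {c : ZMod n} {t : ℕ}
    (hf : FreeSeg n a a0 c (k + t)) : ∃ c', FreeSeg n a a0 c' (k + t + 1) := by
  obtain ⟨x, q1, q2, hxroot, hq12, hq2k, hm1, hm2⟩ := C.exists_root_two c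
  have hd : c + (q2 : ZMod n) = (c + (q1 : ZMod n)) + ((q2 - q1 : ℕ) : ZMod n) := by
    rw [Nat.cast_sub hq12.le]; push_cast; ring
  set j1 := c + (q1 : ZMod n) with hj1def
  have hT1 : ∀ u : ℕ, u ≤ k - (q2 - q1) → a j1 ≤ a (j1 - (u : ZMod n)) := by
    intro u hu
    exact C.t1 hxroot hm1 (by omega) (by omega) (hd ▸ hm2) hu
  have hne1 : a j1 ≠ a0 := hf q1 (by omega)
  refine ⟨c - ((k - q2 : ℕ) : ZMod n), ?_⟩
  intro h hh
  by_cases hcase : h < k - q2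
  · have e : h + (k - (q2 - q1) - h) = q1 + (k - q2) := by omega
    have e2 : ((h + (k - (q2 - q1) - h) : ℕ) : ZMod n) = ((q1 + (k - q2) : ℕ) : ZMod n) := by
      rw [e]
    push_cast at e2
    have hz : c - ((k - q2 : ℕ) : ZMod n) + (h : ZMod n)
        = j1 - ((k - (q2 - q1) - h : ℕ) : ZMod n) := by
      rw [hj1def]; linear_combination e2
    rw [hz]
    intro hEq
    have h1 := hT1 (k - (q2 - q1) - h) (by omega)
    rw [hEq] at h1
    exact hne1 (le_antisymm h1 (C.ha0le j1))
  · have e : (k - q2) + (h - (k - q2)) = h := by omega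
    have e2 : (((k - q2) + (h - (k - q2)) : ℕ) : ZMod n) = ((h : ℕ) : ZMod n) := by rw [e]
    push_cast at e2
    have hz : c - ((k - q2 : ℕ) : ZMod n) + (h : ZMod n)
        = c + ((h - (k - q2) : ℕ) : ZMod n) := by linear_combination - e2
    rw [hz]
    exact hf _ (by omega)

theorem stepI (C : Ctx n k a α a0) (c : ZMod n) :
    ∃ h : ℕ, h < k ∧ a (c + (h : ZMod n)) = a0 := by
  haveI : NeZero n := C.nz
  by_contra hcon
  push_neg at hcon
  have hfree : FreeSeg n a a0 c k := fun h hh => hcon h hh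
  have hext : ∀ t : ℕ, ∃ c', FreeSeg n a a0 c' (k + t) := by
    intro t
    induction t with
    | zero => exact ⟨c, hfree⟩
    | succ t ih =>
        obtain ⟨c', hc'⟩ := ih
        exact C.free_extend hc'
  obtain ⟨c', hc'⟩ := hext n
  obtain ⟨w, hw⟩ := C.ha0mem
  have hweq : w = c' + (((w - c').val : ℕ) : ZMod n) := by rw [ZMod.natCast_zmod_val]; ring
  refine hc' (w - c').val ?_ (by rw [← hweq]; exact hw)
  have := ZMod.val_lt (w - c')
  omega

theorem shift0 (c : ZMod n) {p q r : ℕ} (e : p + q = r) :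
    c + (p : ZMod n) + (q : ZMod n) = c + (r : ZMod n) := by
  have e2 : ((p + q : ℕ) : ZMod n) = ((r : ℕ) : ZMod n) := by rw [e]
  push_cast at e2
  linear_combination e2

theorem shift3 (c : ZMod n) {p r h q : ℕ} (e : p + h = q + r) :
    c + (p : ZMod n) - (r : ZMod n) + (h : ZMod n) = c + (q : ZMod n) := by
  have e2 : ((p + h : ℕ) : ZMod n) = ((q + r : ℕ) : ZMod n) := by rw [e]
  push_cast at e2
  linear_combination e2

theorem shift4 (c : ZMod n) {p r h q1 u : ℕ} (e : p + h + u = q1 + r) :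
    c + (p : ZMod n) - (r : ZMod n) + (h : ZMod n) = c + (q1 : ZMod n) - (u : ZMod n) := by
  have e2 : ((p + h + u : ℕ) : ZMod n) = ((q1 + r : ℕ) : ZMod n) := by rw [e]
  push_cast at e2
  linear_combination e2

theorem shift5 (c : ZMod n) {q r p : ℕ} (e : q = p + r) :
    c + (q : ZMod n) - (r : ZMod n) = c + (p : ZMod n) := by
  have e2 : ((q : ℕ) : ZMod n) = ((p + r : ℕ) : ZMod n) := by rw [e]
  push_cast at e2
  linear_combination e2

theorem stepII (C : Ctx n k a α a0) : ∀ ρ : ℕ, ∀ c : ZMod n, ∀ π : ℕ, π < k →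
    k - 1 - π = ρ → a (c + (π : ZMod n)) = a0 →
    (∀ h : ℕ, h < k → a (c + (h : ZMod n)) = a0 → h = π) → False := by
  intro ρ
  induction ρ using Nat.strong_induction_on with
  | _ ρ IH =>
  intro c π hπk hρ hv huniq
  obtain ⟨x, q1, q2, hxroot, hq12, hq2k, hm1, hm2⟩ := C.exists_root_two c
  have hd : c + (q2 : ZMod n) = (c + (q1 : ZMod n)) + ((q2 - q1 : ℕ) : ZMod n) := by
    rw [Nat.cast_sub hq12.le]; push_cast; ring
  have hT1 : ∀ u : ℕ, u ≤ k - (q2 - q1) →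
      a (c + (q1 : ZMod n)) ≤ a (c + (q1 : ZMod n) - (u : ZMod n)) :=
    fun u hu => C.t1 hxroot hm1 (by omega) (by omega) (hd ▸ hm2) hu
  have hT2 : ∀ u : ℕ, u ≤ k - (q2 - q1) →
      a (c + (q2 : ZMod n)) ≤ a (c + (q2 : ZMod n) + (u : ZMod n)) := by
    intro u hu
    have h1 := C.t2 hxroot hm1 (d := q2 - q1) (by omega) (by omega) (hd ▸ hm2) hu
    rw [← hd] at h1
    exact h1
  rcases Nat.lt_trichotomy π q1 with hc1 | hc1 | hc1
  · -- π < q1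
    have h1 := hT1 (q1 - π) (by omega)
    rw [shift5 c (by omega : q1 = π + (q1 - π)), hv] at h1
    have h2 : a (c + (q1 : ZMod n)) = a0 := le_antisymm h1 (C.ha0le _)
    have := huniq q1 (by omega) h2
    omega
  · -- π = q1 : case B1
    have hj2ne : a (c + (q2 : ZMod n)) ≠ a0 := fun he => by
      have := huniq q2 (by omega) he; omega
    obtain ⟨h, hhk, hz⟩ := C.stepI (c + ((π + 1 : ℕ) : ZMod n))
    rw [shift0 c (rfl : (π + 1) + h = π + 1 + h)] at hz
    by_cases hcase : π + 1 + h < k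
    · have := huniq (π + 1 + h) hcase hz
      omega
    · have h2 := hT2 (π + 1 + h - q2) (by omega)
      rw [shift0 c (by omega : q2 + (π + 1 + h - q2) = π + 1 + h), hz] at h2
      exact hj2ne (le_antisymm h2 (C.ha0le _))
  · rcases Nat.lt_trichotomy π q2 with hc2 | hc2 | hc2
    · -- q1 < π < q2 : case A
      have hj1ne : a (c + (q1 : ZMod n)) ≠ a0 := fun he => by
        have := huniq q1 (by omega) he; omega
      refine IH (k - 1 - (π + (k - q2))) (by omega) (c + (q2 : ZMod n) - (k : ZMod n))
        (π + (k - q2)) (by omega) rfl ?_ ?_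
      · rw [shift3 c (by omega : q2 + (π + (k - q2)) = π + k)]
        exact hv
      · intro h hhk hza
        by_cases hcase : q2 + h < k
        · rw [shift4 c (by omega : q2 + h + (k - (q2 - q1) - h) = q1 + k)] at hza
          have h1 := hT1 (k - (q2 - q1) - h) (by omega)
          rw [hza] at h1
          exact absurd (le_antisymm h1 (C.ha0le _)) hj1ne
        · rw [shift3 c (by omega : q2 + h = (q2 + h - k) + k)] at hza
          have := huniq (q2 + h - k) (by omega) hza
          omega
    · -- π = q2 : case B2
      have hj1ne : a (c + (q1 : ZMod n)) ≠ a0 := fun he => by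
        have := huniq q1 (by omega) he; omega
      obtain ⟨h, hhk, hz⟩ := C.stepI (c + (π : ZMod n) - (k : ZMod n))
      by_cases hcase : π + h < k
      · rw [shift4 c (by omega : π + h + (k - h - (q2 - q1)) = q1 + k)] at hz
        have h1 := hT1 (k - h - (q2 - q1)) (by omega)
        rw [hz] at h1
        exact absurd (le_antisymm h1 (C.ha0le _)) hj1ne
      · rw [shift3 c (by omega : π + h = (π + h - k) + k)] at hz
        have := huniq (π + h - k) (by omega) hz
        omega
    · -- q2 < π
      have h2 := hT2 (π - q2) (by omega)
      rw [shift0 c (by omega : q2 + (π - q2) = π), hv] at h2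
      have h3 : a (c + (q2 : ZMod n)) = a0 := le_antisymm h2 (C.ha0le _)
      have := huniq q2 (by omega) h3
      omega

theorem shift6 (c : ZMod n) {p r h u : ℕ} (e : p + h + u = r) :
    c + (p : ZMod n) - (r : ZMod n) + (h : ZMod n) = c - (u : ZMod n) := by
  have e2 : ((p + h + u : ℕ) : ZMod n) = ((r : ℕ) : ZMod n) := by rw [e]
  push_cast at e2
  linear_combination e2

theorem shift7 (c : ZMod n) {p r h : ℕ} (e : p + h = r) :
    c + (p : ZMod n) - (r : ZMod n) + (h : ZMod n) = c := by
  have e2 : ((p + h : ℕ) : ZMod n) = ((r : ℕ) : ZMod n) := by rw [e]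
  push_cast at e2
  linear_combination e2

theorem claim1 (C : Ctx n k a α a0) (i : ZMod n) :
    2 ≤ ((Cseg n k i).filter (fun j => ¬ a0 < a j)).card := by
  classical
  have hkn := C.hkn
  obtain ⟨h0, hh0k, hh0⟩ := C.stepI i
  have hmem0 : i + (h0 : ZMod n) ∈ (Cseg n k i).filter (fun j => ¬ a0 < a j) :=
    Finset.mem_filter.2 ⟨add_mem_Cseg hh0k i, by rw [hh0]; exact lt_irrefl a0⟩
  by_contra hcard
  have hcard2 : ((Cseg n k i).filter (fun j => ¬ a0 < a j)).card ≤ 1 :=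
    Nat.lt_succ_iff.1 (Nat.lt_of_not_le hcard)
  have hone : ∀ y ∈ (Cseg n k i).filter (fun j => ¬ a0 < a j), y = i + (h0 : ZMod n) :=
    fun y hy => Finset.card_le_one.1 hcard2 y hy _ hmem0
  refine C.stepII (k - 1 - h0) i h0 hh0k rfl hh0 ?_
  intro h hhk hza
  have hs : i + (h : ZMod n) ∈ (Cseg n k i).filter (fun j => ¬ a0 < a j) :=
    Finset.mem_filter.2 ⟨add_mem_Cseg hhk i, by rw [hza]; exact lt_irrefl a0⟩
  have h1 := hone _ hs
  have h2 : ((h : ℕ) : ZMod n) = ((h0 : ℕ) : ZMod n) := by linear_combination h1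
  exact C.cast_injn (by omega) (by omega) h2

theorem claim2 (C : Ctx n k a α a0) (i : ZMod n) (hai : a0 < a i) : a i ≤ 2 * a0 := by
  classical
  have hkn := C.hkn
  obtain ⟨x, hxroot, hix⟩ := C.exists_root_mem i
  have hex : ∃ t : ℕ, 0 < t ∧ t < k ∧ a (i + (t : ZMod n)) = a0 := by
    obtain ⟨h0, hh0k, hh0⟩ := C.stepI i
    have hne : h0 ≠ 0 := by
      intro h
      subst h
      rw [Nat.cast_zero, add_zero] at hh0
      omega
    exact ⟨h0, by omega, hh0k, hh0⟩
  obtain ⟨ht0, htk, hta⟩ := Nat.find_spec hex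
  set t := Nat.find hex with ht
  obtain ⟨h, hhk, hz⟩ := C.stepI (i + (t : ZMod n) - (k : ZMod n))
  rcases Nat.lt_trichotomy (t + h) k with hc | hc | hc
  · rw [shift6 i (by omega : t + h + (k - t - h) = k)] at hz
    have hsurg := C.surg hxroot hix (s := k - t - h) (t := t) (by omega) (by omega) (by omega)
    rw [hz, hta] at hsurg
    omega
  · rw [shift7 i (by omega : t + h = k)] at hz
    omega
  · rw [shift3 i (by omega : t + h = (t + h - k) + k)] at hz
    have := Nat.find_min hex (m := t + h - k) (by omega)
    exact absurd ⟨by omega, by omega, hz⟩ this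

end Ctx

theorem stmt5 (n k : ℕ) (hn : 2 ≤ n) (hk1 : 1 ≤ k) (hk2 : k ≤ n - 1)
    (a : ZMod n → ℤ) (α : ℤ) (hpos : ∀ i : ZMod n, 1 ≤ a i)
    (hfacet : IsFacet n k a α)
    (hnonbool : ¬ IsBooleanMultiple n k a α) (hnonrank : ¬ IsRankMultiple n k a α)
    (a0 : ℤ) (ha0 : IsLeast (Set.range a) a0) :
    (∀ i : ZMod n, 2 ≤ ((Cseg n k i).filter (fun j => ¬ a0 < a j)).card) ∧
    (∀ i : ZMod n, a0 < a i → a i ≤ 2 * a0) := by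
  have C : Ctx n k a α a0 :=
    { hn := hn, hk1 := hk1, hk2 := hk2, hpos := hpos,
      hvalid := hfacet.1, hdim := hfacet.2,
      ha0mem := by obtain ⟨w, hw⟩ := ha0.1; exact ⟨w, hw⟩,
      ha0le := fun i => ha0.2 ⟨i, rfl⟩ }
  exact ⟨fun i => C.claim1 i, fun i hi => C.claim2 i hi⟩
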